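/- For every integer q ≥ 2, every integer k ≥ 9, every word w of length k over an alphabet of q letters, and every complex number x with |x| = 1.65, one has |(x − q)·A_w(x)| > 1. -/

import Mathlib

/-- The `i`-th autocorrelation bit `b_i` of a word `w` (for `1 ≤ i ≤ w.length`):
`1` if the prefix of `w` of length `i` equals the suffix of `w` of length `i`, else `0`. -/
def acorrBit {α : Type*} [DecidableEq α] (w : List α) (i : ℕ) : ℕ :=
  if w.take i = w.drop (w.length - i) then 1 else 0

/-- The inverse autocorrelation polynomial `A_w(x) = ∑_{i=1}^k b_i x^(i-1)`, over `ℝ`. -/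
noncomputable def APolyR {α : Type*} [DecidableEq α] (w : List α) : Polynomial ℝ :=
  ∑ i ∈ Finset.range w.length, Polynomial.C (acorrBit w (i + 1) : ℝ) * Polynomial.X ^ i

/-- The inverse autocorrelation polynomial `A_w(x)`, over `ℂ`. -/
noncomputable def APolyC {α : Type*} [DecidableEq α] (w : List α) : Polynomial ℂ :=
  ∑ i ∈ Finset.range w.length, Polynomial.C (acorrBit w (i + 1) : ℂ) * Polynomial.X ^ i

/-- The recurrence polynomial `P_w(x) = 1 + (x - q)·A_w(x)`, over `ℝ`. -/
noncomputable def PPolyR (q : ℕ) {α : Type*} [DecidableEq α] (w : List α) : Polynomial ℝ :=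
  1 + (Polynomial.X - Polynomial.C (q : ℝ)) * APolyR w

/-- The recurrence polynomial `P_w(x) = 1 + (x - q)·A_w(x)`, over `ℂ`. -/
noncomputable def PPolyC (q : ℕ) {α : Type*} [DecidableEq α] (w : List α) : Polynomial ℂ :=
  1 + (Polynomial.X - Polynomial.C (q : ℂ)) * APolyC w

/-- `h_w(n)`: the number of words of length `n` over `Fin q` whose last `w.length` letters
equal `w` and which contain no other occurrence of `w` as consecutive letters. -/
noncomputable def hitCount (q : ℕ) (w : List (Fin q)) (n : ℕ) : ℕ :=
  Nat.card {l : List (Fin q) // l.length = n ∧ l.drop (n - w.length) = w ∧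
    ∀ p < n - w.length, (l.drop p).take w.length ≠ w}

/-- The first hitting probability `P_h(w,n) = h_w(n+k)/q^(n+k)` where `k = w.length`. -/
noncomputable def hitProb (q : ℕ) (w : List (Fin q)) (n : ℕ) : ℝ :=
  (hitCount q w (n + w.length) : ℝ) / (q : ℝ) ^ (n + w.length)

/-- The constant `C_{w/w'} = ln(1+r)/r` with `r = (A_w(q) − A_{w'}(q))/A_{w'}(q)`. -/
noncomputable def Crat (q : ℕ) (w w' : List (Fin q)) : ℝ :=
  Real.log (1 + ((APolyR w).eval (q : ℝ) - (APolyR w').eval (q : ℝ)) / (APolyR w').eval (q : ℝ)) /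
    (((APolyR w).eval (q : ℝ) - (APolyR w').eval (q : ℝ)) / (APolyR w').eval (q : ℝ))

/-- The partial-fraction coefficient `c_w = 1/P_w'(α_m)`. -/
noncomputable def cwCoef (q : ℕ) (w : List (Fin q)) (αm : ℝ) : ℝ :=
  1 / ((PPolyR q w).derivative.eval αm)

namespace Stmt5Aux

set_option linter.unusedSectionVars false
variable {α : Type*} [DecidableEq α]

def Per (w : List α) (d : ℕ) : Prop := ∀ i, i + d < w.length → w[i]? = w[i + d]?

lemma per_len (w : List α) : Per w w.length := fun _ h => absurd h (by omega)

lemma per_sub {w : List α} {p p' : ℕ} (hp : Per w p) (hp' : Per w p')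
    (hle : p ≤ p') (hs : p + p' ≤ w.length) : Per w (p' - p) := by
  intro i h
  by_cases hc : i + p' < w.length
  · have e1 := hp' i hc
    have h2 : (i + (p' - p)) + p < w.length := by omega
    have e2 := hp (i + (p' - p)) h2
    rw [show i + (p' - p) + p = i + p' by omega] at e2
    rw [e1, e2]
  · have h2 : (i - p) + p < w.length := by omega
    have e1 := hp (i - p) h2
    rw [show i - p + p = i by omega] at e1
    have h3 : (i - p) + p' < w.length := by omega
    have e2 := hp' (i - p) h3
    rw [show i - p + p' = i + (p' - p) by omega] at e2
    rw [← e1, e2]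

lemma per_mod {w : List α} {p : ℕ} (hp0 : 0 < p) (hp : Per w p) :
    ∀ p', Per w p' → p + p' ≤ w.length → Per w (p' % p) := by
  intro p'
  induction p' using Nat.strong_induction_on with
  | _ p' ih =>
    intro hp' hs
    rcases lt_or_ge p' p with h | h
    · rwa [Nat.mod_eq_of_lt h]
    · have hsub : Per w (p' - p) := per_sub hp hp' h hs
      have := ih (p' - p) (by omega) hsub (by omega)
      rwa [Nat.mod_eq_sub_mod h]

lemma per_one {w : List α} (h1 : Per w 1) : ∀ d, Per w d := by
  intro d
  induction d with
  | zero => intro i hi; rfl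
  | succ d ih =>
    intro i hi
    have e1 := ih i (by omega)
    have e2 := h1 (i + d) (by omega)
    rw [e1, show i + (d+1) = i + d + 1 by omega]
    exact e2

lemma take_drop_iff {w : List α} {n : ℕ} (hn : n ≤ w.length) :
    w.take n = w.drop (w.length - n) ↔ Per w (w.length - n) := by
  constructor
  · intro h i hi
    have hi' : i < n := by omega
    have e := congrArg (fun l => l[i]?) h
    simp only [List.getElem?_take, List.getElem?_drop] at e
    rw [if_pos hi'] at e
    rw [e, show w.length - n + i = i + (w.length - n) by omega]
  · intro h
    apply List.ext_getElem?
    intro i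
    rw [List.getElem?_take, List.getElem?_drop]
    by_cases hi : i < n
    · rw [if_pos hi]
      have e := h i (by omega)
      rw [e, show i + (w.length - n) = w.length - n + i by omega]
    · rw [if_neg hi]
      symm
      apply List.getElem?_eq_none
      omega

lemma geom_le_inv (r : ℝ) (n : ℕ) (h0 : 0 ≤ r) (h1 : r < 1) :
    ∑ i ∈ Finset.range n, r^i ≤ 1/(1-r) := by
  have e : ∑ i ∈ Finset.range n, r^i = (1-r^n)/(1-r) := by
    rw [geom_sum_eq (ne_of_lt h1) n, div_eq_div_iff (by linarith) (by linarith)]; ring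
  rw [e]
  have hrn : (0:ℝ) ≤ r^n := by positivity
  exact div_le_div_of_nonneg_right (by linarith) (by linarith) |>.trans_eq rfl

lemma geom_le_pow (n N : ℕ) (h : n ≤ N) :
    ∑ i ∈ Finset.range n, (1.65:ℝ)^i ≤ 1.65^N * (1/0.65) := by
  have e := geom_sum_eq (show (1.65:ℝ) ≠ 1 by norm_num) n
  rw [e]
  have h1 : (1.65:ℝ)^n ≤ 1.65^N := pow_le_pow_right₀ (by norm_num) h
  rw [div_le_iff₀ (by norm_num)]
  nlinarith [pow_pos (show (0:ℝ) < 1.65 by norm_num) N]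

/-- The key bound on the non-leading correlation terms, when the minimal period `p ≥ 2`. -/
lemma sum_bound (w : List α) (hk : 9 ≤ w.length)
    (p : ℕ) (hp2 : 2 ≤ p) (hpk : p ≤ w.length) (hPer : Per w p)
    (hmin : ∀ d, 0 < d → Per w d → p ≤ d) :
    ∑ i ∈ Finset.range (w.length - 1), (acorrBit w (i+1) : ℝ) * 1.65 ^ i ≤
      1.65^(w.length-3) * (1/(1 - 1/1.65^2)) + 1.65^(w.length-5) * (1/0.65) := by
  set k := w.length with hkdef
  set m := min (p-1) (k-p) with hmdef
  set J := (k-1)/p with hJdef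
  set B := Finset.image (fun t => k-1-(t+1)*p) (Finset.range J) with hBdef
  have hstep : ∀ i ∈ Finset.range (k-1), (acorrBit w (i+1) : ℝ) * 1.65 ^ i ≤
      (if i ∈ Finset.range m then (1.65:ℝ)^i else 0) + (if i ∈ B then (1.65:ℝ)^i else 0) := by
    intro i hi
    have hi' : i < k - 1 := Finset.mem_range.1 hi
    have hbit : acorrBit w (i+1) = 0 ∨ acorrBit w (i+1) = 1 := by
      unfold acorrBit; split <;> simp
    rcases hbit with hb | hb
    · rw [hb]
      simp only [Nat.cast_zero, zero_mul]
      positivity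
    · have hmem : i ∈ Finset.range m ∨ i ∈ B := by
        have htd : w.take (i+1) = w.drop (w.length - (i+1)) := by
          by_contra hc
          simp [acorrBit, hc] at hb
        have hd : Per w (k - (i+1)) := (take_drop_iff (by omega)).1 htd
        have hpd : p ≤ k - (i+1) := hmin _ (by omega) hd
        by_cases hc : (k - (i+1)) + p ≤ k
        · -- p divides d := k - (i+1)
          have hm := per_mod (by omega) hPer _ hd (by omega)
          have hmod0 : (k - (i+1)) % p = 0 := by
            by_contra h0
            have h1 := hmin _ (Nat.pos_of_ne_zero h0) hm
            have h2 := Nat.mod_lt (k - (i+1)) (show 0 < p by omega)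
            omega
          obtain ⟨j, hj⟩ : p ∣ (k - (i+1)) := Nat.dvd_of_mod_eq_zero hmod0
          have hj0 : j ≠ 0 := by rintro rfl; simp at hj; omega
          have hjp : j * p = k - (i+1) := (Nat.mul_comm j p).trans hj.symm
          refine Or.inr (Finset.mem_image.2 ⟨j-1, Finset.mem_range.2 ?_, ?_⟩)
          · have : j ≤ (k-1)/p := (Nat.le_div_iff_mul_le (by omega)).2 (by omega)
            omega
          · have hj1 : (j-1+1) * p = k - (i+1) := by
              rw [show j-1+1 = j by omega]; exact hjp
            rw [hj1]; omega
        · -- tail case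
          refine Or.inl (Finset.mem_range.2 ?_)
          have h1 : m ≤ p - 1 := min_le_left _ _
          omega
      have hpos : (0:ℝ) ≤ (1.65:ℝ)^i := by positivity
      rw [hb]
      rcases hmem with h | h
      · rw [if_pos h]; split <;> simp <;> linarith
      · rw [if_pos h]; split <;> simp <;> linarith
  have hmk : m ≤ k - 5 := by
    have h1 : m ≤ p - 1 := min_le_left _ _
    have h2 : m ≤ k - p := min_le_right _ _
    omega
  calc ∑ i ∈ Finset.range (k-1), (acorrBit w (i+1) : ℝ) * 1.65 ^ i
      ≤ ∑ i ∈ Finset.range (k-1), ((if i ∈ Finset.range m then (1.65:ℝ)^i else 0)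
          + (if i ∈ B then (1.65:ℝ)^i else 0)) := Finset.sum_le_sum hstep
    _ = (∑ i ∈ Finset.range (k-1) ∩ Finset.range m, (1.65:ℝ)^i)
          + ∑ i ∈ Finset.range (k-1) ∩ B, (1.65:ℝ)^i := by
        rw [Finset.sum_add_distrib, Finset.sum_ite_mem, Finset.sum_ite_mem]
    _ ≤ (∑ i ∈ Finset.range m, (1.65:ℝ)^i) + ∑ i ∈ B, (1.65:ℝ)^i := by
        gcongr <;> first
          | exact Finset.inter_subset_right
          | (intro i _ _; positivity)
    _ ≤ 1.65^(k-5) * (1/0.65) + 1.65^(k-3) * (1/(1 - 1/1.65^2)) := by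
        gcongr ?_ + ?_
        · exact geom_le_pow m (k-5) hmk
        · -- bound the sum over B
          have himg : ∑ i ∈ B, (1.65:ℝ)^i
              = ∑ t ∈ Finset.range J, (1.65:ℝ)^(k-1-(t+1)*p) := by
            rw [hBdef]
            apply Finset.sum_image
            intro t1 h1 t2 h2 heq
            have ha : (t1+1)*p ≤ k-1 :=
              (Nat.le_div_iff_mul_le (show 0 < p by omega)).1 (by
                have := Finset.mem_range.1 h1; omega)
            have hb : (t2+1)*p ≤ k-1 :=
              (Nat.le_div_iff_mul_le (show 0 < p by omega)).1 (by
                have := Finset.mem_range.1 h2; omega)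
            have : (t1+1)*p = (t2+1)*p := by simp only at heq; omega
            have := Nat.eq_of_mul_eq_mul_right (show 0 < p by omega) this
            omega
          rw [himg]
          have hterm : ∀ t ∈ Finset.range J,
              (1.65:ℝ)^(k-1-(t+1)*p) ≤ 1.65^(k-3) * ((1:ℝ)/1.65^2)^t := by
            intro t ht
            have htp : (t+1)*p ≤ k-1 :=
              (Nat.le_div_iff_mul_le (show 0 < p by omega)).1 (by
                have := Finset.mem_range.1 ht; omega)
            have h2t : 2*(t+1) ≤ (t+1)*p := by
              calc 2*(t+1) = (t+1)*2 := by ring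
                _ ≤ (t+1)*p := Nat.mul_le_mul_left _ hp2
            have he1 : (1.65:ℝ)^(k-1-(t+1)*p) ≤ 1.65^(k-3-2*t) :=
              pow_le_pow_right₀ (by norm_num) (by omega)
            have he2 : (1.65:ℝ)^(k-3-2*t) * 1.65^(2*t) = 1.65^(k-3) := by
              rw [← pow_add]; congr 1; omega
            have hpow : ((1:ℝ)/1.65^2)^t = ((1.65:ℝ)^(2*t))⁻¹ := by
              rw [div_pow, one_pow, ← pow_mul, one_div]
            rw [hpow]
            calc (1.65:ℝ)^(k-1-(t+1)*p) ≤ 1.65^(k-3-2*t) := he1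
              _ = 1.65^(k-3) * ((1.65:ℝ)^(2*t))⁻¹ := by
                  exact (eq_mul_inv_iff_mul_eq₀ (by positivity)).mpr he2
          calc ∑ t ∈ Finset.range J, (1.65:ℝ)^(k-1-(t+1)*p)
              ≤ ∑ t ∈ Finset.range J, 1.65^(k-3) * ((1:ℝ)/1.65^2)^t :=
                Finset.sum_le_sum hterm
            _ = 1.65^(k-3) * ∑ t ∈ Finset.range J, ((1:ℝ)/1.65^2)^t := by
                rw [Finset.mul_sum]
            _ ≤ 1.65^(k-3) * (1/(1 - 1/1.65^2)) :=
                mul_le_mul_of_nonneg_left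
                  (geom_le_inv _ _ (by norm_num) (by norm_num)) (by positivity)
    _ = 1.65^(k-3) * (1/(1 - 1/1.65^2)) + 1.65^(k-5) * (1/0.65) := by ring

end Stmt5Aux

/-- For `q ≥ 2`, a word `w` of length `k ≥ 9`, and any complex `x` with
`|x| = 1.65`, one has `|(x − q)·A_w(x)| > 1`. -/
theorem stmt5 (q k : ℕ) (hq : 2 ≤ q) (hk : 9 ≤ k) (w : List (Fin q)) (hwlen : w.length = k) :
    ∀ x : ℂ, ‖x‖ = 1.65 →
      1 < ‖(x - (q : ℂ)) * (APolyC w).eval x‖ := by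
  intro x hx
  classical
  subst hwlen
  open Stmt5Aux in
  have hk : 9 ≤ w.length := hk
  have habsq : (0.35:ℝ) ≤ ‖x - q‖ := by
    have h1 : ‖(q:ℂ)‖ ≤ ‖x - q‖ + ‖x‖ := by
      calc ‖(q:ℂ)‖ = ‖(q - x) + x‖ := by ring_nf
        _ ≤ ‖q - x‖ + ‖x‖ := norm_add_le _ _
        _ = ‖x - q‖ + ‖x‖ := by rw [norm_sub_rev]
    have h2 : ‖(q:ℂ)‖ = (q:ℝ) := by simp
    have h3 : (2:ℝ) ≤ (q:ℝ) := by exact_mod_cast hq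
    rw [h2, hx] at h1
    norm_num at h1 ⊢
    linarith
  have heval : (APolyC w).eval x
      = ∑ i ∈ Finset.range w.length, (acorrBit w (i+1) : ℂ) * x ^ i := by
    simp [APolyC, Polynomial.eval_finset_sum]
  rw [norm_mul]
  have hex : ∃ d, 0 < d ∧ Stmt5Aux.Per w d := ⟨w.length, by omega, Stmt5Aux.per_len w⟩
  set p := Nat.find hex with hpdef
  obtain ⟨hp0, hPp⟩ := Nat.find_spec hex
  have hmin : ∀ d, 0 < d → Stmt5Aux.Per w d → p ≤ d := fun d hd hPd => Nat.find_le ⟨hd, hPd⟩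
  have hpk : p ≤ w.length := hmin _ (by omega) (Stmt5Aux.per_len w)
  have hS0 : 0 ≤ ‖(APolyC w).eval x‖ := norm_nonneg _
  by_cases hp1 : p = 1
  · -- constant word: geometric series
    have hone : Stmt5Aux.Per w 1 := hp1 ▸ hPp
    have hall : ∀ i ∈ Finset.range w.length, ((acorrBit w (i+1) : ℂ)) * x ^ i = x ^ i := by
      intro i hi
      have hi' := Finset.mem_range.1 hi
      have hper := Stmt5Aux.per_one hone (w.length - (i+1))
      have htd := (Stmt5Aux.take_drop_iff (show i+1 ≤ w.length by omega)).2 hper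
      rw [show acorrBit w (i+1) = 1 by simp [acorrBit, htd]]
      simp
    have hgeom : (APolyC w).eval x = ∑ i ∈ Finset.range w.length, x^i := by
      rw [heval]; exact Finset.sum_congr rfl hall
    have hmul : ‖(APolyC w).eval x‖ * ‖x - 1‖
        = ‖x ^ w.length - 1‖ := by
      rw [hgeom, ← norm_mul, geom_sum_mul]
    have h1 : (1.65:ℝ)^w.length ≤ ‖x ^ w.length - 1‖ + 1 := by
      calc (1.65:ℝ)^w.length = ‖x ^ w.length‖ := by rw [norm_pow, hx]
        _ = ‖(x ^ w.length - 1) + 1‖ := by ring_nf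
        _ ≤ ‖x ^ w.length - 1‖ + ‖1‖ := norm_add_le _ _
        _ = ‖x ^ w.length - 1‖ + 1 := by rw [norm_one]
    have h2 : ‖x - 1‖ ≤ 2.65 := by
      calc ‖x - 1‖ ≤ ‖x‖ + ‖(1:ℂ)‖ := by
            simpa [sub_eq_add_neg] using norm_add_le x (-1)
        _ = 2.65 := by rw [hx, norm_one]; norm_num
    have h9 : (1.65:ℝ)^9 ≤ 1.65^w.length := pow_le_pow_right₀ (by norm_num) hk
    have h20 : 0 ≤ ‖x - 1‖ := norm_nonneg _
    have hbig : (89:ℝ) ≤ ‖x ^ w.length - 1‖ := by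
      have : (90:ℝ) ≤ (1.65:ℝ)^9 := by norm_num
      linarith
    have hS' : (89:ℝ)/2.65 ≤ ‖(APolyC w).eval x‖ := by
      have hh : ‖(APolyC w).eval x‖ * ‖x - 1‖
          ≤ ‖(APolyC w).eval x‖ * 2.65 := by
        exact mul_le_mul_of_nonneg_left h2 hS0
      rw [hmul] at hh
      linarith
    nlinarith [habsq, hS']
  · -- minimal period at least 2
    have hp2 : 2 ≤ p := by omega
    have hsb := Stmt5Aux.sum_bound w hk p hp2 hpk hPp hmin
    have hsplit : ∑ i ∈ Finset.range w.length, ((acorrBit w (i+1):ℂ)) * x^i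
        = (∑ i ∈ Finset.range (w.length - 1), ((acorrBit w (i+1):ℂ)) * x^i)
            + x^(w.length-1) := by
      have h := Finset.sum_range_succ
        (fun i => ((acorrBit w (i+1):ℂ)) * x^i) (w.length - 1)
      rw [show w.length - 1 + 1 = w.length by omega] at h
      rw [h]
      rw [show acorrBit w w.length = 1 by simp [acorrBit]]
      push_cast
      ring
    have habs2 : ‖∑ i ∈ Finset.range (w.length - 1), ((acorrBit w (i+1):ℂ)) * x^i‖
        ≤ ∑ i ∈ Finset.range (w.length - 1), (acorrBit w (i+1):ℝ) * 1.65^i := by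
      refine (norm_sum_le _ _).trans (le_of_eq ?_)
      refine Finset.sum_congr rfl fun i _ => ?_
      rw [norm_mul, norm_pow, hx, Complex.norm_natCast]
    have htri : (1.65:ℝ)^(w.length-1)
          - (∑ i ∈ Finset.range (w.length-1), (acorrBit w (i+1):ℝ) * 1.65^i)
        ≤ ‖(APolyC w).eval x‖ := by
      rw [heval, hsplit]
      have hxp : ‖x^(w.length-1)‖ = (1.65:ℝ)^(w.length-1) := by
        rw [norm_pow, hx]
      have h3 : ‖x^(w.length-1)‖
          ≤ ‖(∑ i ∈ Finset.range (w.length - 1), ((acorrBit w (i+1):ℂ)) * x^i)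
              + x^(w.length-1)‖
            + ‖∑ i ∈ Finset.range (w.length - 1), ((acorrBit w (i+1):ℂ)) * x^i‖ := by
        calc ‖x^(w.length-1)‖
            = ‖((∑ i ∈ Finset.range (w.length - 1), ((acorrBit w (i+1):ℂ)) * x^i)
                + x^(w.length-1))
              - (∑ i ∈ Finset.range (w.length - 1), ((acorrBit w (i+1):ℂ)) * x^i)‖ := by
              congr 1
              ring
          _ ≤ _ := by
              simpa [sub_eq_add_neg] using norm_add_le
                ((∑ i ∈ Finset.range (w.length - 1), ((acorrBit w (i+1):ℂ)) * x^i)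
                  + x^(w.length-1))
                (-(∑ i ∈ Finset.range (w.length - 1), ((acorrBit w (i+1):ℂ)) * x^i))
      rw [hxp] at h3
      linarith
    have e1 : (1.65:ℝ)^(w.length-1) = 1.65^(w.length-5) * 1.65^4 := by
      rw [← pow_add]; congr 1; omega
    have e3 : (1.65:ℝ)^(w.length-3) = 1.65^(w.length-5) * 1.65^2 := by
      rw [← pow_add]; congr 1; omega
    rw [e1] at htri
    rw [e3] at hsb
    have hu : (1.65:ℝ)^4 ≤ 1.65^(w.length-5) := pow_le_pow_right₀ (by norm_num) (by omega)
    have hc : (1.5:ℝ) ≤ 1.65^4 - 1.65^2 * (1/(1 - 1/1.65^2)) - (1/0.65) := by norm_num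
    have hS2 : (2.9:ℝ) ≤ ‖(APolyC w).eval x‖ := by
      nlinarith [htri, hsb, hu, hc]
    nlinarith [habsq, hS2]
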